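/- Let p = (p_1, p_2) and q = (q_1, q_2) be probability vectors on {1, 2} with all four entries strictly positive. Then 1/(1 + max(p_1/p_2, q_1/q_2)) + 1/(1 + max(p_2/p_1, q_2/q_1)) = 1 − D_TV(p, q). That is, on two-element supports the Gumbel coupling achieves the optimal collision probability 1 − D_TV(p, q). -/
import Mathlib

/-- On two-element supports with all entries strictly positive, the Gumbel coupling
achieves the optimal collision probability `1 - D_TV(p,q)`. -/
theorem stmt_14 (p₁ p₂ q₁ q₂ : ℝ)
    (hp₁ : 0 < p₁) (hp₂ : 0 < p₂) (hq₁ : 0 < q₁) (hq₂ : 0 < q₂)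
    (hp : p₁ + p₂ = 1) (hq : q₁ + q₂ = 1) :
    1 / (1 + max (p₁ / p₂) (q₁ / q₂)) + 1 / (1 + max (p₂ / p₁) (q₂ / q₁))
      = 1 - (1 / 2) * (|p₁ - q₁| + |p₂ - q₂|) := by
  rcases le_total p₁ q₁ with h | h
  · have h2 : q₂ ≤ p₂ := by linarith
    rw [max_eq_right (by rw [div_le_div_iff₀ hp₂ hq₂]; nlinarith),
        max_eq_left (by rw [div_le_div_iff₀ hq₁ hp₁]; nlinarith),
        abs_of_nonpos (by linarith), abs_of_nonneg (by linarith)]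
    field_simp
    ring_nf
    nlinarith
  · have h2 : p₂ ≤ q₂ := by linarith
    rw [max_eq_left (by rw [div_le_div_iff₀ hq₂ hp₂]; nlinarith),
        max_eq_right (by rw [div_le_div_iff₀ hp₁ hq₁]; nlinarith),
        abs_of_nonneg (by linarith), abs_of_nonpos (by linarith)]
    field_simp
    ring_nf
    nlinarith
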